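/- Let m ≥ 1 and let K = {1} ∪ ∪_{n=0}^∞ [1 − 2^{−n}, 1 − (3/4)·2^{−n}] ⊂ ℝ. Define a jet H of order m on K by H^0(t) = 3^{−mn} for t ∈ [1 − 2^{−n}, 1 − (3/4)·2^{−n}], H^0(1) = 0, and H^k ≡ 0 on K for 1 ≤ k ≤ m. Then H is a Whitney field of class C^m on K. -/

import Mathlib

open Set

/-- A Whitney field of class `C^m` on `K`. -/
def IsWhitneyField (m : ℕ) (K : Set ℝ) (F : ℕ → ℝ → ℝ) : Prop :=
  ∀ k ≤ m, ∀ ε > (0 : ℝ), ∃ δ > (0 : ℝ), ∀ a ∈ K, ∀ b ∈ K, |b - a| < δ →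
    |F k b - ∑ l ∈ Finset.range (m - k + 1), F (k + l) a * (b - a) ^ l / (Nat.factorial l : ℝ)|
      ≤ ε * |b - a| ^ (m - k)

/-- Final numeric estimate: if `x ≥ (1/4)·2⁻ⁿ` and `x < (1/4)·2⁻ᴺ` with
`(2/3)^N < ε/4^m`, then `3^{-mn} ≤ ε x^m`. -/
lemma final_est (m n N : ℕ) (hm : 1 ≤ m) (ε : ℝ) (hN : (2/3:ℝ)^N < ε/4^m)
    (x : ℝ) (hx1 : (1/4:ℝ)*(1/2)^n ≤ x) (hx2 : x < (1/4)*(1/2)^N) :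
    ((1/3:ℝ))^(m*n) ≤ ε * x^m := by
  have hε : 0 < ε := by
    have h1 : (0:ℝ) < (2/3:ℝ)^N := by positivity
    have h2 := h1.trans hN
    rcases div_pos_iff.mp h2 with ⟨h, _⟩ | ⟨_, h⟩
    · exact h
    · exact absurd h (not_lt.mpr (by positivity))
  have hn : N < n := by
    have h : ((1/2:ℝ))^n < (1/2)^N := by nlinarith
    exact (pow_lt_pow_iff_right_of_lt_one₀ (by norm_num) (by norm_num)).mp h
  have hNmn : N ≤ m * n := le_trans hn.le (Nat.le_mul_of_pos_left n hm)
  have h23 : (2/3:ℝ)^(m*n) ≤ (2/3)^N := pow_le_pow_of_le_one (by norm_num) (by norm_num) hNmn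
  have hx0 : (0:ℝ) ≤ (1/4)*(1/2)^n := by positivity
  have hxm : ((1/4:ℝ)*(1/2)^n)^m ≤ x^m := pow_le_pow_left₀ hx0 hx1 m
  calc ((1/3:ℝ))^(m*n) = (2/3)^(m*n) * (1/2)^(m*n) := by rw [← mul_pow]; norm_num
    _ ≤ (ε/4^m) * (1/2)^(m*n) :=
        mul_le_mul_of_nonneg_right (le_of_lt (lt_of_le_of_lt h23 hN)) (by positivity)
    _ = ε * ((1/4)*(1/2)^n)^m := by
        rw [mul_pow, ← pow_mul, Nat.mul_comm n m]
        field_simp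
        rw [← mul_pow]; norm_num
    _ ≤ ε * x^m := mul_le_mul_of_nonneg_left hxm hε.le

/-- Core estimate for the zeroth-order Whitney condition (ordered version). -/
lemma core (m : ℕ) (hm : 1 ≤ m) (H0 : ℝ → ℝ)
    (hH0 : ∀ n : ℕ, ∀ t ∈ Icc (1 - (1/2:ℝ)^n) (1 - (3/4)*(1/2:ℝ)^n), H0 t = (1/3:ℝ)^(m*n))
    (hH1 : H0 1 = 0) (ε : ℝ) (hε : 0 < ε) :
    ∃ δ > (0:ℝ), ∀ a b : ℝ,
      (a = 1 ∨ ∃ n : ℕ, a ∈ Icc (1 - (1/2:ℝ)^n) (1 - (3/4)*(1/2:ℝ)^n)) →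
      (b = 1 ∨ ∃ n : ℕ, b ∈ Icc (1 - (1/2:ℝ)^n) (1 - (3/4)*(1/2:ℝ)^n)) →
      a ≤ b → b - a < (δ:ℝ) → |H0 b - H0 a| ≤ ε * (b - a)^m := by
  obtain ⟨N, hN⟩ := exists_pow_lt_of_lt_one (div_pos hε (show (0:ℝ) < 4^m by positivity))
    (show (2/3:ℝ) < 1 by norm_num)
  refine ⟨(1/4)*(1/2)^N, by positivity, ?_⟩
  intro a b ha hb hab hlt
  have hb_le1 : b ≤ 1 := by
    rcases hb with rfl | ⟨n', hb'⟩
    · exact le_refl 1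
    · have h2 := hb'.2
      nlinarith [pow_pos (show (0:ℝ) < 1/2 by norm_num) n']
  rcases ha with rfl | ⟨n, han⟩
  · -- a = 1, so b = 1
    have hb1 : b = 1 := le_antisymm hb_le1 hab
    subst hb1
    simp only [hH1, sub_zero, abs_zero]
    positivity
  · have hHa : H0 a = (1/3:ℝ)^(m*n) := hH0 n a han
    rcases hb with rfl | ⟨n', hbn'⟩
    · -- b = 1
      have hgap : (1/4:ℝ)*(1/2)^n ≤ 1 - a := by
        have h2 := han.2
        nlinarith [pow_pos (show (0:ℝ) < 1/2 by norm_num) n]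
      have hL : |H0 1 - H0 a| ≤ (1/3:ℝ)^(m*n) := by
        rw [hH1, hHa, zero_sub, abs_neg, abs_of_nonneg (by positivity)]
      exact hL.trans (final_est m n N hm ε hN (1 - a) hgap hlt)
    · rcases lt_trichotomy n' n with h | rfl | h
      · -- n' < n : contradiction, since then b < a
        exfalso
        have hle : ((1/2:ℝ))^n ≤ (1/2)^(n'+1) :=
          pow_le_pow_of_le_one (by norm_num) (by norm_num) (by omega)
        have hps : ((1/2:ℝ))^(n'+1) = (1/2)^n' * (1/2) := pow_succ _ _
        have hp := pow_pos (show (0:ℝ) < 1/2 by norm_num) n'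
        have h1 := han.1
        have h2 := hbn'.2
        nlinarith
      · -- same interval
        rw [hH0 n' b hbn', hHa, sub_self, abs_zero]
        exact mul_nonneg hε.le (pow_nonneg (sub_nonneg.mpr hab) m)
      · -- n < n'
        have hHb : H0 b = (1/3:ℝ)^(m*n') := hH0 n' b hbn'
        have hmono : ((1/3:ℝ))^(m*n') ≤ (1/3)^(m*n) :=
          pow_le_pow_of_le_one (by norm_num) (by norm_num) (Nat.mul_le_mul_left m h.le)
        have hL : |H0 b - H0 a| ≤ (1/3:ℝ)^(m*n) := by
          rw [hHb, hHa, abs_of_nonpos (by linarith)]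
          have := pow_pos (show (0:ℝ) < 1/3 by norm_num) (m*n')
          linarith
        have hle : ((1/2:ℝ))^n' ≤ (1/2)^(n+1) :=
          pow_le_pow_of_le_one (by norm_num) (by norm_num) (by omega)
        have hps : ((1/2:ℝ))^(n+1) = (1/2)^n * (1/2) := pow_succ _ _
        have hgap : (1/4:ℝ)*(1/2)^n ≤ b - a := by
          have h1 := hbn'.1
          have h2 := han.2
          nlinarith
        exact hL.trans (final_est m n N hm ε hN (b - a) hgap hlt)

/-- from the proof of Proposition 4.1: the jet `H` on the compact set
`K = {1} ∪ ⋃ₙ [1 - 2⁻ⁿ, 1 - (3/4)·2⁻ⁿ]` given by `H⁰ = 3^{-mn}` on the `n`-th interval,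
`H⁰(1) = 0`, and `Hᵏ ≡ 0` for `1 ≤ k ≤ m`, is a Whitney field of class `C^m` on `K`. -/
theorem example_jet_is_whitney_field (m : ℕ) (hm : 1 ≤ m)
    (K : Set ℝ)
    (hKdef : K = {1} ∪ ⋃ n : ℕ, Icc (1 - (1 / 2 : ℝ) ^ n) (1 - (3 / 4) * (1 / 2 : ℝ) ^ n))
    (H : ℕ → ℝ → ℝ)
    (hH0 : ∀ n : ℕ, ∀ t ∈ Icc (1 - (1 / 2 : ℝ) ^ n) (1 - (3 / 4) * (1 / 2 : ℝ) ^ n),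
      H 0 t = (1 / 3 : ℝ) ^ (m * n))
    (hH1 : H 0 1 = 0)
    (hHk : ∀ k, 1 ≤ k → k ≤ m → ∀ t ∈ K, H k t = 0) :
    IsWhitneyField m K H := by
  have hmem : ∀ x ∈ K, x = 1 ∨ ∃ n : ℕ, x ∈ Icc (1-(1/2:ℝ)^n) (1-(3/4)*(1/2:ℝ)^n) := by
    intro x hx
    rw [hKdef] at hx
    rcases hx with hx | hx
    · exact Or.inl hx
    · exact Or.inr (mem_iUnion.mp hx)
  intro k hk ε hε
  rcases Nat.eq_zero_or_pos k with rfl | hk1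
  · -- k = 0
    obtain ⟨δ, hδ, hcore⟩ := core m hm (H 0) hH0 hH1 ε hε
    refine ⟨δ, hδ, ?_⟩
    intro a ha b hb hab
    have hsum : ∑ l ∈ Finset.range (m - 0 + 1), H (0 + l) a * (b - a)^l / (Nat.factorial l : ℝ)
        = H 0 a := by
      rw [Finset.sum_eq_single_of_mem 0 (Finset.mem_range.mpr (by omega))]
      · simp
      · intro l hl hl0
        have hlm : l ≤ m := by
          have := Finset.mem_range.mp hl; omega
        rw [Nat.zero_add, hHk l (Nat.one_le_iff_ne_zero.mpr hl0) hlm a ha]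
        simp
    rw [hsum, Nat.sub_zero]
    rcases le_total a b with h | h
    · have habs : |b - a| = b - a := abs_of_nonneg (sub_nonneg.mpr h)
      rw [habs]
      exact hcore a b (hmem a ha) (hmem b hb) h (by rwa [habs] at hab)
    · have habs : |b - a| = a - b := by rw [abs_sub_comm, abs_of_nonneg (sub_nonneg.mpr h)]
      rw [habs, abs_sub_comm]
      exact hcore b a (hmem b hb) (hmem a ha) h (by rwa [habs] at hab)
  · -- k ≥ 1 : everything vanishes
    refine ⟨1, one_pos, ?_⟩
    intro a ha b hb _
    have h1 : H k b = 0 := hHk k hk1 hk b hb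
    have h2 : ∑ l ∈ Finset.range (m - k + 1), H (k + l) a * (b - a)^l / (Nat.factorial l : ℝ)
        = 0 := by
      apply Finset.sum_eq_zero
      intro l hl
      have hlm : k + l ≤ m := by
        have := Finset.mem_range.mp hl; omega
      rw [hHk (k + l) (by omega) hlm a ha]
      simp
    rw [h1, h2, sub_zero, abs_zero]
    positivity
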